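/- There exists a constant C such that for all ξ ∈ ℝ^d, 1/|I(ξ)| ≤ C·e^{−|ξ|}·(1+|ξ|)^{(d−1)/2}, where I(ξ) = ∫_{S^{d−1}} e^{−⟨ω,ξ⟩} dω. -/

import Mathlib

open MeasureTheory Metric Set
open scoped Pointwise ENNReal

noncomputable section

variable {n : ℕ}


set_option maxHeartbeats 1000000 in
lemma cap_lower (n : ℕ) (v : EuclideanSpace ℝ (Fin (n+1))) (hv : ‖v‖ = 1)
    (t : ℝ) (ht0 : 0 < t) (ht1 : t ≤ 1) :
    ENNReal.ofReal ((1/4) * (Real.sqrt t / Real.sqrt (n+1)) ^ n) ≤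
      (volume : Measure (EuclideanSpace ℝ (Fin (n+1)))).toSphere
        {ω : sphere (0 : EuclideanSpace ℝ (Fin (n+1))) 1 |
          1 - t ≤ inner (𝕜 := ℝ) (ω : EuclideanSpace ℝ (Fin (n+1))) v} := by
  classical
  set a : ℝ := Real.sqrt t / (2 * Real.sqrt (n+1)) with ha
  have hd_pos : (0:ℝ) < Real.sqrt (n+1) := Real.sqrt_pos.2 (by positivity)
  have ha_pos : 0 < a := by positivity
  have ha2 : a ^ 2 = t / (4 * (n+1)) := by
    rw [ha, div_pow, mul_pow, Real.sq_sqrt ht0.le, Real.sq_sqrt (by positivity)]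
    ring
  -- orthonormal basis with b 0 = v
  have hcard : Module.finrank ℝ (EuclideanSpace ℝ (Fin (n+1))) = Fintype.card (Fin (n+1)) := by
    simp [finrank_euclideanSpace_fin]
  have horth : Orthonormal ℝ (({0} : Set (Fin (n+1))).restrict (fun _ => v)) := by
    rw [orthonormal_iff_ite]
    intro i j
    have hij : i = j := Subtype.ext (by rw [i.2, j.2])
    subst hij
    rw [if_pos rfl]
    show (inner ℝ v v : ℝ) = 1
    rw [real_inner_self_eq_norm_sq, hv]; norm_num
  obtain ⟨b, hb⟩ := horth.exists_orthonormalBasis_extension_of_card_eq hcard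
  have hb0 : b 0 = v := hb 0 rfl
  set e := (MeasurableEquiv.toLp 2 (Fin (n+1) → ℝ)).symm with he
  set P : Set (Fin (n+1) → ℝ) :=
    univ.pi (fun i => if i = 0 then Icc (1/2 : ℝ) (3/4) else Icc (-a) a) with hP
  have hPm : MeasurableSet P := MeasurableSet.univ_pi (fun i => by
    split <;> exact measurableSet_Icc)
  set B : Set (EuclideanSpace ℝ (Fin (n+1))) := ⇑b.repr ⁻¹' (⇑e ⁻¹' P) with hB
  -- volume of B
  have hvolB : volume B = ENNReal.ofReal ((1/4) * (2*a) ^ n) := by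
    rw [hB, b.measurePreserving_repr.measure_preimage
        ((e.measurable hPm).nullMeasurableSet),
      (EuclideanSpace.volume_preserving_symm_measurableEquiv_toLp (Fin (n+1))).measure_preimage
        hPm.nullMeasurableSet, hP, volume_pi_pi]
    rw [Fin.prod_univ_succ]
    simp only [if_pos rfl, Fin.succ_ne_zero, ite_false, if_true]
    rw [Real.volume_Icc, Real.volume_Icc, Finset.prod_const, Finset.card_univ, Fintype.card_fin]
    rw [← ENNReal.ofReal_pow (by linarith), ← ENNReal.ofReal_mul (by norm_num)]
    norm_num
    ring_nf
  -- the cap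
  set A : Set (sphere (0 : EuclideanSpace ℝ (Fin (n+1))) 1) :=
    {ω : sphere (0 : EuclideanSpace ℝ (Fin (n+1))) 1 |
      1 - t ≤ inner (𝕜 := ℝ) (ω : EuclideanSpace ℝ (Fin (n+1))) v} with hA
  have hAm : MeasurableSet A :=
    (isClosed_le continuous_const
      ((continuous_subtype_val).inner continuous_const)).measurableSet
  have hsub : B ⊆ Ioo (0:ℝ) 1 • ((↑) '' A) := by
    intro x hx
    have hxP : ∀ i, (e (b.repr x)) i ∈
        (if i = 0 then Icc (1/2 : ℝ) (3/4) else Icc (-a) a) := by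
      intro i; exact hx i (mem_univ i)
    have hei : ∀ i, (e (b.repr x)) i = b.repr x i := fun i => rfl
    have hw0 : b.repr x 0 ∈ Icc (1/2 : ℝ) (3/4) := by
      have := hxP 0; rw [hei, if_pos rfl] at this; exact this
    have hwi : ∀ i : Fin n, (b.repr x i.succ) ^ 2 ≤ a ^ 2 := by
      intro i
      have := hxP i.succ
      rw [hei, if_neg (Fin.succ_ne_zero i)] at this
      have h1 : |b.repr x i.succ| ≤ a := abs_le.2 ⟨this.1, this.2⟩
      calc (b.repr x i.succ) ^ 2 = |b.repr x i.succ| ^ 2 := (sq_abs _).symm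
        _ ≤ a ^ 2 := by nlinarith [abs_nonneg (b.repr x i.succ)]
    set w0 := b.repr x 0 with hw0def
    set R := ∑ i : Fin n, (b.repr x i.succ) ^ 2 with hR
    have hR0 : 0 ≤ R := Finset.sum_nonneg fun i _ => sq_nonneg _
    have hRt : R ≤ t / 4 := by
      calc R ≤ ∑ _i : Fin n, a ^ 2 := Finset.sum_le_sum fun i _ => hwi i
        _ = n * a ^ 2 := by simp [Finset.sum_const, Finset.card_univ]
        _ ≤ t / 4 := by
            rw [ha2, mul_div_assoc']
            rw [div_le_div_iff₀ (by positivity) (by norm_num : (0:ℝ) < 4)]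
            nlinarith [ht0.le, Nat.cast_nonneg (α := ℝ) n]
    set N := ‖x‖ with hN
    have hN0 : 0 ≤ N := norm_nonneg x
    have hNsq : N ^ 2 = w0 ^ 2 + R := by
      have h1 : N = ‖b.repr x‖ := (b.repr.norm_map x).symm
      have h2 : ‖b.repr x‖ = Real.sqrt (∑ i, ‖b.repr x i‖ ^ 2) :=
        EuclideanSpace.norm_eq (b.repr x)
      have h3 : (∑ i, ‖b.repr x i‖ ^ 2) = w0 ^ 2 + R := by
        simp only [Real.norm_eq_abs, sq_abs]
        rw [Fin.sum_univ_succ]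
      rw [h1, h2, h3, Real.sq_sqrt (by nlinarith [sq_nonneg w0])]
    have hNhalf : 1/2 ≤ N := by nlinarith [hw0.1, hw0.2]
    have hNpos : 0 < N := by linarith
    have hNlt1 : N < 1 := by nlinarith [hw0.1, hw0.2]
    have hNle : N ≤ w0 + t/4 := by nlinarith [hw0.1, hw0.2]
    have htN : t * (1/2) ≤ t * N := mul_le_mul_of_nonneg_left hNhalf ht0.le
    have hkey : (1 - t) * N ≤ w0 := by nlinarith [htN]
    have hinner : inner (𝕜 := ℝ) x v = w0 := by
      rw [hw0def, b.repr_apply_apply, ← hb0, real_inner_comm]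
    refine Set.mem_smul.2 ⟨N, ⟨hNpos, hNlt1⟩, N⁻¹ • x, ?_, ?_⟩
    · refine ⟨⟨N⁻¹ • x, ?_⟩, ?_, rfl⟩
      · rw [mem_sphere_zero_iff_norm, norm_smul, norm_inv, ← hN, Real.norm_eq_abs,
          abs_of_pos hNpos, inv_mul_cancel₀ hNpos.ne']
      · show 1 - t ≤ inner (𝕜 := ℝ) (N⁻¹ • x) v
        rw [real_inner_smul_left, hinner]
        rw [inv_mul_eq_div, le_div_iff₀ hNpos]
        linarith [hkey]
    · rw [smul_smul, mul_inv_cancel₀ hNpos.ne', one_smul]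
  -- conclusion
  have hdim : Module.finrank ℝ (EuclideanSpace ℝ (Fin (n+1))) = n + 1 :=
    finrank_euclideanSpace_fin
  calc ENNReal.ofReal ((1/4) * (Real.sqrt t / Real.sqrt (n+1)) ^ n)
      = volume B := by
        rw [hvolB]
        congr 1
        rw [ha]
        ring_nf
    _ ≤ volume (Ioo (0:ℝ) 1 • (Subtype.val '' A)) := measure_mono hsub
    _ ≤ ((n+1 : ℕ) : ℝ≥0∞) * volume (Ioo (0:ℝ) 1 • (Subtype.val '' A)) :=
        le_mul_of_one_le_left (by positivity)
          (by exact_mod_cast Nat.succ_le_succ (Nat.zero_le n))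
    _ = (volume : Measure (EuclideanSpace ℝ (Fin (n+1)))).toSphere A := by
        rw [Measure.toSphere_apply' _ hAm, hdim]

lemma key_lower (n : ℕ) : ∃ c : ℝ, 0 < c ∧ ∀ ξ : EuclideanSpace ℝ (Fin (n+1)),
    c * Real.exp ‖ξ‖ * ((1 + ‖ξ‖) ^ ((n:ℝ)/2))⁻¹ ≤
      ∫ ω : sphere (0 : EuclideanSpace ℝ (Fin (n+1))) 1,
        Real.exp (-(inner (𝕜 := ℝ) (ω : EuclideanSpace ℝ (Fin (n+1))) ξ))
        ∂((volume : Measure (EuclideanSpace ℝ (Fin (n+1)))).toSphere) := by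
  classical
  set E := EuclideanSpace ℝ (Fin (n+1))
  set μ := (volume : Measure E).toSphere with hμ
  set M := (μ univ).toReal with hM
  have hMpos : 0 < M := by
    rw [hM, hμ, Measure.toSphere_apply_univ]
    refine ENNReal.toReal_pos ?_ ?_
    · refine mul_ne_zero ?_ (measure_ball_pos volume (0:E) one_pos).ne'
      rw [show Module.finrank ℝ E = n + 1 from finrank_euclideanSpace_fin]
      simp
    · exact ENNReal.mul_ne_top (ENNReal.natCast_ne_top _) measure_ball_lt_top.ne
  set K : ℝ := (1/4) * ((Real.sqrt (n+1))⁻¹) ^ n with hK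
  have hKpos : 0 < K := by
    have : (0:ℝ) < Real.sqrt (n+1) := Real.sqrt_pos.2 (by positivity)
    positivity
  set p : ℝ := (n:ℝ)/2 with hp
  have hppos : 0 ≤ p := by positivity
  set c₁ : ℝ := M / Real.exp 1 / Real.exp 1 with hc₁
  set c₂ : ℝ := K / Real.exp 1 with hc₂
  refine ⟨min c₁ c₂, lt_min (by positivity) (by positivity), fun ξ => ?_⟩
  set ρ := ‖ξ‖ with hρ
  have hρ0 : 0 ≤ ρ := norm_nonneg ξ
  set f : sphere (0:E) 1 → ℝ := fun ω => Real.exp (-(inner (𝕜 := ℝ) (ω : E) ξ)) with hf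
  have hfc : Continuous f :=
    Real.continuous_exp.comp ((continuous_subtype_val.inner continuous_const).neg)
  have hfi : Integrable f μ :=
    hfc.integrable_of_hasCompactSupport
      (IsCompact.of_isClosed_subset isCompact_univ (isClosed_tsupport _) (Set.subset_univ _))
  have hfnn : ∀ ω, 0 ≤ f ω := fun ω => (Real.exp_pos _).le
  have hrpow1 : (1:ℝ) ≤ (1 + ρ) ^ p := Real.one_le_rpow (by linarith) hppos
  have hrpow_pos : (0:ℝ) < (1 + ρ) ^ p := Real.rpow_pos_of_pos (by linarith) p
  rcases le_or_gt ρ 1 with hle | hlt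
  · -- small ξ
    have hIlb : M / Real.exp 1 ≤ ∫ ω, f ω ∂μ := by
      have hconst : ∀ ω : sphere (0:E) 1, Real.exp (-1) ≤ f ω := by
        intro ω
        refine Real.exp_le_exp.2 ?_
        have h1 : inner (𝕜 := ℝ) (ω : E) ξ ≤ ‖(ω : E)‖ * ‖ξ‖ := real_inner_le_norm _ _
        have h2 : ‖(ω : E)‖ = 1 := mem_sphere_zero_iff_norm.1 ω.2
        rw [h2, one_mul] at h1
        linarith
      calc M / Real.exp 1 = M • Real.exp (-1) := by
            rw [Real.exp_neg, smul_eq_mul, div_eq_mul_inv]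
        _ = ∫ _ω : sphere (0:E) 1, Real.exp (-1) ∂μ := by
            rw [integral_const]; rfl
        _ ≤ ∫ ω, f ω ∂μ := integral_mono (integrable_const _) hfi hconst
    calc min c₁ c₂ * Real.exp ρ * ((1 + ρ) ^ p)⁻¹
        ≤ c₁ * Real.exp 1 * 1 := by
          have h1 : ((1 + ρ) ^ p)⁻¹ ≤ 1 := by
            rw [inv_le_one_iff₀]; right; exact hrpow1
          have h2 : Real.exp ρ ≤ Real.exp 1 := Real.exp_le_exp.2 hle
          have h3 : min c₁ c₂ ≤ c₁ := min_le_left _ _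
          have hc₁0 : (0:ℝ) ≤ c₁ := by positivity
          exact mul_le_mul (mul_le_mul h3 h2 (Real.exp_pos _).le hc₁0) h1
            (by positivity) (by positivity)
      _ = M / Real.exp 1 := by
          rw [hc₁]; field_simp
      _ ≤ _ := hIlb
  · -- large ξ
    have hρ1 : 1 ≤ ρ := hlt.le
    have hρpos : 0 < ρ := by linarith
    set t := ρ⁻¹ with ht
    have ht0 : 0 < t := by positivity
    have ht1 : t ≤ 1 := by
      rw [ht]; exact inv_le_one_of_one_le₀ hρ1
    set v : E := (-ρ⁻¹) • ξ with hv
    have hvnorm : ‖v‖ = 1 := by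
      rw [hv, norm_smul, norm_neg, norm_inv, Real.norm_eq_abs, abs_of_pos hρpos, ← hρ,
        inv_mul_cancel₀ hρpos.ne']
    set A : Set (sphere (0:E) 1) := {ω : sphere (0:E) 1 | 1 - t ≤ inner (𝕜 := ℝ) (ω : E) v}
      with hA
    have hAm : MeasurableSet A :=
      (isClosed_le continuous_const
        ((continuous_subtype_val).inner continuous_const)).measurableSet
    have hcap := cap_lower n v hvnorm t ht0 ht1
    set m : ℝ := (1/4) * (Real.sqrt t / Real.sqrt (n+1)) ^ n with hm
    have hm0 : 0 ≤ m := by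
      have h1 : (0:ℝ) ≤ Real.sqrt t := Real.sqrt_nonneg _
      have h2 : (0:ℝ) < Real.sqrt (n+1) := Real.sqrt_pos.2 (by positivity)
      positivity
    have hmA : m ≤ (μ A).toReal := by
      have := ENNReal.toReal_mono (measure_ne_top μ A) hcap
      rwa [ENNReal.toReal_ofReal hm0] at this
    have hcapint : Real.exp (ρ - 1) * (μ A).toReal ≤ ∫ ω in A, f ω ∂μ := by
      rw [mul_comm, ← smul_eq_mul]
      refine setIntegral_ge_of_const_le hAm (measure_ne_top μ A) ?_ hfi.integrableOn
      intro ω hω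
      refine Real.exp_le_exp.2 ?_
      have h1 : 1 - t ≤ inner (𝕜 := ℝ) (ω : E) v := hω
      have h2 : inner (𝕜 := ℝ) (ω : E) v = -ρ⁻¹ * inner (𝕜 := ℝ) (ω : E) ξ := by
        rw [hv, real_inner_smul_right]
      have h3 : ρ * (1 - t) ≤ ρ * inner (𝕜 := ℝ) (ω : E) v :=
        mul_le_mul_of_nonneg_left h1 hρ0
      rw [h2, ht] at h3
      have h4 : ρ * (-ρ⁻¹ * inner (𝕜 := ℝ) (ω : E) ξ) = -(inner (𝕜 := ℝ) (ω : E) ξ) := by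
        field_simp
      rw [h4] at h3
      have h5 : ρ * (1 - ρ⁻¹) = ρ - 1 := by field_simp
      rw [h5] at h3
      exact h3
    have hIlb : Real.exp (ρ - 1) * m ≤ ∫ ω, f ω ∂μ := by
      calc Real.exp (ρ - 1) * m ≤ Real.exp (ρ - 1) * (μ A).toReal :=
            mul_le_mul_of_nonneg_left hmA (Real.exp_pos _).le
        _ ≤ ∫ ω in A, f ω ∂μ := hcapint
        _ ≤ ∫ ω, f ω ∂μ := setIntegral_le_integral hfi
            (Filter.Eventually.of_forall hfnn)
    -- compare constants
    have hsqrt_t : (Real.sqrt t) ^ n = (ρ ^ p)⁻¹ := by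
      rw [ht, Real.sqrt_inv, inv_pow]
      congr 1
      rw [Real.sqrt_eq_rpow, ← Real.rpow_natCast (ρ ^ ((1:ℝ)/2)) n, ← Real.rpow_mul hρ0]
      rw [hp]
      congr 1
      ring
    have hmK : m = K * (ρ ^ p)⁻¹ := by
      rw [hm, hK, div_pow, hsqrt_t]
      ring
    have hρp_le : ρ ^ p ≤ (1 + ρ) ^ p := Real.rpow_le_rpow hρ0 (by linarith) hppos
    have hρp_pos : (0:ℝ) < ρ ^ p := Real.rpow_pos_of_pos hρpos p
    calc min c₁ c₂ * Real.exp ρ * ((1 + ρ) ^ p)⁻¹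
        ≤ c₂ * Real.exp ρ * (ρ ^ p)⁻¹ := by
          have h1 : ((1 + ρ) ^ p)⁻¹ ≤ (ρ ^ p)⁻¹ :=
            inv_anti₀ hρp_pos hρp_le
          have h3 : min c₁ c₂ ≤ c₂ := min_le_right _ _
          exact mul_le_mul (mul_le_mul h3 le_rfl (Real.exp_pos _).le (by positivity)) h1
            (by positivity) (by positivity)
      _ = Real.exp (ρ - 1) * m := by
          rw [hmK, hc₂, Real.exp_sub]
          field_simp
      _ ≤ _ := hIlb

end

open MeasureTheory Metric

/-- `1/|I(ξ)| ≤ C e^{−|ξ|} (1+|ξ|)^{(d−1)/2}`, where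
`I(ξ) = ∫_{S^{d−1}} e^{−⟨ω,ξ⟩} dω`. -/
theorem stmt_10 (d : ℕ) (hd : 1 ≤ d) :
    ∃ C : ℝ, ∀ ξ : EuclideanSpace ℝ (Fin d),
      1 / |∫ ω : sphere (0 : EuclideanSpace ℝ (Fin d)) 1,
            Real.exp (-(inner (𝕜 := ℝ) (ω : EuclideanSpace ℝ (Fin d)) ξ))
            ∂((volume : Measure (EuclideanSpace ℝ (Fin d))).toSphere)| ≤
        C * Real.exp (-‖ξ‖) * (1 + ‖ξ‖) ^ (((d : ℝ) - 1) / 2) := by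
  obtain ⟨n, rfl⟩ : ∃ n, d = n + 1 := ⟨d - 1, (Nat.succ_pred_eq_of_pos hd).symm⟩
  obtain ⟨c, hc, hI⟩ := key_lower n
  refine ⟨c⁻¹, fun ξ => ?_⟩
  have hexp : ((((n+1 : ℕ)) : ℝ) - 1)/2 = (n:ℝ)/2 := by push_cast; ring
  rw [hexp]
  set ρ := ‖ξ‖ with hρ
  have hρ0 : 0 ≤ ρ := norm_nonneg ξ
  set p : ℝ := (n:ℝ)/2 with hp
  have hrpow_pos : (0:ℝ) < (1 + ρ) ^ p := Real.rpow_pos_of_pos (by linarith) p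
  have hIlb := hI ξ
  set I := ∫ ω : sphere (0 : EuclideanSpace ℝ (Fin (n+1))) 1,
        Real.exp (-(inner (𝕜 := ℝ) (ω : EuclideanSpace ℝ (Fin (n+1))) ξ))
        ∂((volume : Measure (EuclideanSpace ℝ (Fin (n+1)))).toSphere) with hIdef
  have hlbpos : (0:ℝ) < c * Real.exp ρ * ((1 + ρ) ^ p)⁻¹ := by
    have := Real.exp_pos ρ
    have h2 : (0:ℝ) < ((1 + ρ) ^ p)⁻¹ := by positivity
    positivity
  have hIpos : 0 < I := lt_of_lt_of_le hlbpos hIlb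
  rw [abs_of_pos hIpos, div_le_iff₀ hIpos]
  calc (1:ℝ) = (c⁻¹ * Real.exp (-ρ) * (1 + ρ) ^ p) * (c * Real.exp ρ * ((1 + ρ) ^ p)⁻¹) := by
        rw [Real.exp_neg]
        field_simp
      _ ≤ (c⁻¹ * Real.exp (-ρ) * (1 + ρ) ^ p) * I :=
        mul_le_mul_of_nonneg_left hIlb
          (mul_nonneg (mul_nonneg (inv_nonneg.2 hc.le) (Real.exp_pos _).le) hrpow_pos.le)
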